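/- A Partition instance with integers s₁,…,s_N summing to 2B has an equal-sum bipartition if and only if the two-client scheduling instance with m = N days, p(i,1) = p(i,2) = s_i for every day i, and equitability k = 3B admits a k-equitable set of schedules. -/
import Mathlib

lemma aux6 (N : ℕ) (s : Fin N → ℕ) (f : Fin N → Bool) :
    (∑ i, if f i then 2 * s i else s i)
      = ∑ i, s i + ∑ i ∈ Finset.univ.filter (fun i => f i), s i := by
  rw [Finset.sum_filter, ← Finset.sum_add_distrib]
  apply Finset.sum_congr rfl
  intro i _
  by_cases h : f i <;> simp [h, two_mul]

lemma aux6' (N : ℕ) (s : Fin N → ℕ) (f : Fin N → Bool) :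
    (∑ i, if f i then s i else 2 * s i)
      + ∑ i ∈ Finset.univ.filter (fun i => f i), s i = 2 * ∑ i, s i := by
  rw [Finset.sum_filter, ← Finset.sum_add_distrib, Finset.mul_sum]
  apply Finset.sum_congr rfl
  intro i _
  by_cases h : f i <;> simp [h, two_mul]

theorem stmt6 (N B : ℕ) (s : Fin N → ℕ) (hsum : ∑ i, s i = 2 * B) :
    (∃ S₁ : Finset (Fin N), ∑ i ∈ S₁, s i = B) ↔
    (∃ first : Fin N → Bool,
      (∑ i, if first i then s i else 2 * s i) ≤ 3 * B ∧
      (∑ i, if first i then 2 * s i else s i) ≤ 3 * B) := by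
  constructor
  · rintro ⟨S₁, hS⟩
    refine ⟨fun i => decide (i ∈ S₁), ?_, ?_⟩
    · have h := aux6' N s (fun i => decide (i ∈ S₁))
      simp only [decide_eq_true_eq, Finset.filter_mem_eq_inter, Finset.univ_inter] at h ⊢
      omega
    · have h := aux6 N s (fun i => decide (i ∈ S₁))
      simp only [decide_eq_true_eq, Finset.filter_mem_eq_inter, Finset.univ_inter] at h ⊢
      omega
  · rintro ⟨f, h1, h2⟩
    refine ⟨Finset.univ.filter (fun i => f i), ?_⟩
    have ha := aux6 N s f
    have hb := aux6' N s f
    omega
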